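/- Let p be an odd prime and t a nonzero integer. Let the group ℤ_p^× of p-adic units act on the additive group A = ℚ_p/ℤ_p by a·(x + ℤ_p) = (a^t·x) + ℤ_p, and let A^{inv} = { x ∈ A : a·x = x for all a ∈ ℤ_p^× } be the subgroup of invariants. If (p−1) does not divide t, then A^{inv} = 0. If (p−1) divides t, write t = k(p−1) with k = p^r·k_0 and p ∤ k_0; then A^{inv} is a cyclic group of order p^{r+1}. -/

import Mathlib

open scoped Classical

/-- The image of `ℤ_[p]` in `ℚ_[p]`, as an additive subgroup. -/
noncomputable def ZpInQp (p : ℕ) [Fact p.Prime] : AddSubgroup ℚ_[p] :=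
  (PadicInt.Coe.ringHom (p := p)).range.toAddSubgroup

/-- The additive group `ℚ_p/ℤ_p`, i.e. `ℤ/p^∞`. -/
abbrev QpModZp (p : ℕ) [Fact p.Prime] := ℚ_[p] ⧸ ZpInQp p

/-- `x ∈ ℚ_p/ℤ_p` is invariant for the action of `ℤ_p^×` twisted by `t`,
where a unit `a` acts by `a·(y + ℤ_p) = a^t·y + ℤ_p`. -/
def TwistedInvariant (p : ℕ) [Fact p.Prime] (t : ℤ) (x : QpModZp p) : Prop :=
  ∀ a : ℤ_[p]ˣ, ∀ y : ℚ_[p], x = QuotientAddGroup.mk y →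
    (QuotientAddGroup.mk ((((a : ℤ_[p]) : ℚ_[p]) ^ t) * y) : QpModZp p) = x

namespace Statement14Aux

variable {p : ℕ} [Fact p.Prime]

lemma norm_le_of_dvd {z w : ℤ_[p]} (h : z ∣ w) : ‖w‖ ≤ ‖z‖ := by
  obtain ⟨c, rfl⟩ := h
  rw [norm_mul]
  exact mul_le_of_le_one_right (norm_nonneg _) (PadicInt.norm_le_one c)

lemma norm_eq_one_of_not_dvd {z : ℤ_[p]} (h : ¬ (p : ℤ_[p]) ∣ z) : ‖z‖ = 1 :=
  le_antisymm z.norm_le_one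
    (not_lt.mp fun hlt => h ((PadicInt.norm_lt_one_iff_dvd z).mp hlt))

lemma norm_natCast_eq_one {n : ℕ} (hn : ¬ p ∣ n) : ‖(n : ℤ_[p])‖ = 1 := by
  have hcast : ((n : ℤ) : ℤ_[p]) = (n : ℤ_[p]) := by push_cast; ring
  refine le_antisymm (PadicInt.norm_le_one _) (not_lt.mp fun hlt => hn ?_)
  have h2 := (PadicInt.norm_int_lt_one_iff_dvd (p := p) (n : ℤ)).mp (by rwa [hcast])
  exact_mod_cast h2

lemma norm_add_eq_left {x y : ℤ_[p]} (h : ‖y‖ < ‖x‖) : ‖x + y‖ = ‖x‖ := by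
  rw [PadicInt.norm_add_eq_max_of_ne (ne_of_gt h), max_eq_left h.le]

lemma dvd_iff_toZMod_eq_zero (z : ℤ_[p]) :
    (p : ℤ_[p]) ∣ z ↔ PadicInt.toZMod z = 0 := by
  rw [← Ideal.mem_span_singleton, ← PadicInt.maximalIdeal_eq_span_p,
    ← PadicInt.ker_toZMod, RingHom.mem_ker]

lemma norm_geom_sum_eq_one {b : ℤ_[p]} (hb : ‖b - 1‖ < 1) {n : ℕ} (hn : ¬ p ∣ n) :
    ‖∑ i ∈ Finset.range n, b ^ i‖ = 1 := by
  have hdvd : (b - 1) ∣ ((∑ i ∈ Finset.range n, b ^ i) - (n : ℤ_[p])) := by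
    have : (∑ i ∈ Finset.range n, b ^ i) - (n : ℤ_[p])
        = ∑ i ∈ Finset.range n, (b ^ i - 1) := by
      rw [Finset.sum_sub_distrib]
      simp
    rw [this]
    refine Finset.dvd_sum fun i _ => ?_
    simpa using sub_dvd_pow_sub_pow b 1 i
  have h1 : ‖(∑ i ∈ Finset.range n, b ^ i) - (n : ℤ_[p])‖ < 1 :=
    lt_of_le_of_lt (norm_le_of_dvd hdvd) hb
  have h2 : ‖(n : ℤ_[p])‖ = 1 := norm_natCast_eq_one hn
  calc ‖∑ i ∈ Finset.range n, b ^ i‖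
      = ‖(n : ℤ_[p]) + ((∑ i ∈ Finset.range n, b ^ i) - (n : ℤ_[p]))‖ := by
        congr 1; ring
    _ = ‖(n : ℤ_[p])‖ := norm_add_eq_left (by rw [h2]; exact h1)
    _ = 1 := h2

lemma norm_pow_sub_one_of_not_dvd {b : ℤ_[p]} (hb : ‖b - 1‖ < 1) {n : ℕ}
    (hn : ¬ p ∣ n) : ‖b ^ n - 1‖ = ‖b - 1‖ := by
  rw [← geom_sum_mul, norm_mul, norm_geom_sum_eq_one hb hn, one_mul]

lemma norm_pow_p_sub_one (hp3 : 3 ≤ p) {b : ℤ_[p]} (hb : ‖b - 1‖ < 1) :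
    ‖b ^ p - 1‖ = ‖b - 1‖ * (p : ℝ)⁻¹ := by
  by_cases hb1 : b = 1
  · subst hb1; simp
  set c := b - 1 with hc
  have hpc : (p : ℤ_[p]) ∣ c := (PadicInt.norm_lt_one_iff_dvd c).mp hb
  have hc0 : c ≠ 0 := fun h => hb1 (by rw [hc] at h; exact sub_eq_zero.mp h)
  have hcpos : 0 < ‖c‖ := norm_pos_iff.mpr hc0
  have hb' : b = c + 1 := by rw [hc]; ring
  have hexp : b ^ p = ∑ k ∈ Finset.range (p + 1), c ^ k * (p.choose k : ℤ_[p]) := by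
    rw [hb', add_pow]
    simp
  have hsplit : b ^ p - 1 - (p : ℤ_[p]) * c
      = ∑ k ∈ Finset.Ico 2 (p + 1), c ^ k * (p.choose k : ℤ_[p]) := by
    rw [hexp, Finset.range_eq_Ico,
      ← Finset.sum_Ico_consecutive _ (Nat.zero_le 2) (by omega)]
    have h2 : ∑ k ∈ Finset.Ico 0 2, c ^ k * (p.choose k : ℤ_[p])
        = 1 + c * p := by
      rw [show Finset.Ico 0 2 = Finset.range 2 from rfl]
      simp [Finset.sum_range_succ]
    rw [h2]; ring
  have hSdvd : ((p : ℤ_[p]) * c ^ 2) ∣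
      ∑ k ∈ Finset.Ico 2 (p + 1), c ^ k * (p.choose k : ℤ_[p]) := by
    refine Finset.dvd_sum fun k hk => ?_
    rw [Finset.mem_Ico] at hk
    obtain ⟨hk2, hkp⟩ := hk
    rcases lt_or_eq_of_le (Nat.lt_succ_iff.mp hkp) with hklt | hkeq
    · have hchoose : (p : ℤ_[p]) ∣ (p.choose k : ℤ_[p]) :=
        Nat.cast_dvd_cast (Nat.Prime.dvd_choose_self (Fact.out : p.Prime)
          (by omega) hklt)
      have hck : c ^ 2 ∣ c ^ k := pow_dvd_pow c hk2
      rw [mul_comm (c ^ k)]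
      exact mul_dvd_mul hchoose hck
    · have h1 : c ^ k = c ^ 2 * c ^ (k - 2) := by
        rw [← pow_add]; congr 1; omega
      have h2 : (p : ℤ_[p]) ∣ c ^ (k - 2) :=
        hpc.trans (dvd_pow_self c (by omega))
      obtain ⟨d, hd⟩ := h2
      exact ⟨d * (p.choose k : ℤ_[p]), by rw [h1, hd]; ring⟩
  have hnormS : ‖∑ k ∈ Finset.Ico 2 (p + 1), c ^ k * (p.choose k : ℤ_[p])‖
      ≤ (p : ℝ)⁻¹ * ‖c‖ ^ 2 := by
    refine (norm_le_of_dvd hSdvd).trans ?_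
    rw [norm_mul, PadicInt.norm_p, norm_pow]
  have hppos : (0 : ℝ) < (p : ℝ)⁻¹ := by
    have : (0 : ℝ) < p := by exact_mod_cast (Fact.out : p.Prime).pos
    positivity
  have hkey : ‖(p : ℤ_[p]) * c + (b ^ p - 1 - (p : ℤ_[p]) * c)‖
      = ‖(p : ℤ_[p]) * c‖ := by
    refine norm_add_eq_left ?_
    rw [hsplit, norm_mul, PadicInt.norm_p]
    calc ‖∑ k ∈ Finset.Ico 2 (p + 1), c ^ k * (p.choose k : ℤ_[p])‖
        ≤ (p : ℝ)⁻¹ * ‖c‖ ^ 2 := hnormS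
      _ < (p : ℝ)⁻¹ * ‖c‖ := by
          refine mul_lt_mul_of_pos_left ?_ hppos
          nlinarith [hb, hcpos]
  have hrw : b ^ p - 1 = (p : ℤ_[p]) * c + (b ^ p - 1 - (p : ℤ_[p]) * c) := by ring
  rw [hrw, hkey, norm_mul, PadicInt.norm_p, mul_comm]

lemma norm_pow_sub_one (hp3 : 3 ≤ p) :
    ∀ n : ℕ, n ≠ 0 → ∀ b : ℤ_[p], ‖b - 1‖ < 1 →
      ‖b ^ n - 1‖ = ‖b - 1‖ * ‖(n : ℤ_[p])‖ := by
  intro n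
  induction n using Nat.strong_induction_on with
  | _ n ih =>
    intro hn b hb
    by_cases hpn : p ∣ n
    · obtain ⟨m, rfl⟩ := hpn
      have hm : m ≠ 0 := by rintro rfl; simp at hn
      have hmn : m < p * m := by
        have h1 : 1 < p := (Fact.out : p.Prime).one_lt
        nlinarith [Nat.pos_of_ne_zero hm]
      have hbp : ‖b ^ p - 1‖ = ‖b - 1‖ * (p : ℝ)⁻¹ := norm_pow_p_sub_one hp3 hb
      have hbp1 : ‖b ^ p - 1‖ < 1 := by
        rw [hbp]
        have h1 : (1 : ℝ) < p := by exact_mod_cast (Fact.out : p.Prime).one_lt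
        have h2 : ‖b - 1‖ * (p : ℝ)⁻¹ ≤ 1 * (p : ℝ)⁻¹ :=
          mul_le_mul_of_nonneg_right hb.le (by positivity)
        refine lt_of_le_of_lt h2 ?_
        rw [one_mul]
        exact inv_lt_one_of_one_lt₀ h1
      have hcast : ((p * m : ℕ) : ℤ_[p]) = (p : ℤ_[p]) * (m : ℤ_[p]) := by
        push_cast; ring
      have hpow : b ^ (p * m) = (b ^ p) ^ m := by rw [← pow_mul]
      rw [hpow, ih m hmn hm (b ^ p) hbp1, hbp, hcast, norm_mul,
        PadicInt.norm_p]
      ring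
    · rw [norm_pow_sub_one_of_not_dvd hb hpn, norm_natCast_eq_one hpn, mul_one]

lemma fermat (a : ℤ_[p]ˣ) : ‖(a : ℤ_[p]) ^ (p - 1) - 1‖ < 1 := by
  rw [PadicInt.norm_lt_one_iff_dvd, dvd_iff_toZMod_eq_zero, map_sub, map_pow, map_one]
  have ha : PadicInt.toZMod (a : ℤ_[p]) ≠ 0 :=
    (a.isUnit.map (PadicInt.toZMod (p := p))).ne_zero
  rw [ZMod.pow_card_sub_one_eq_one ha, sub_self]

lemma norm_inv_sub_one (w : ℤ_[p]ˣ) :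
    ‖((w⁻¹ : ℤ_[p]ˣ) : ℤ_[p]) - 1‖ = ‖(w : ℤ_[p]) - 1‖ := by
  have h : ((w⁻¹ : ℤ_[p]ˣ) : ℤ_[p]) - 1
      = ((w⁻¹ : ℤ_[p]ˣ) : ℤ_[p]) * (1 - (w : ℤ_[p])) := by
    rw [mul_sub, mul_one, Units.inv_mul]
  rw [h, norm_mul, PadicInt.norm_units, one_mul, norm_sub_rev]

lemma norm_zpow_sub_one (a : ℤ_[p]ˣ) (t : ℤ) :
    ‖((a ^ t : ℤ_[p]ˣ) : ℤ_[p]) - 1‖ = ‖(a : ℤ_[p]) ^ t.natAbs - 1‖ := by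
  rcases Int.natAbs_eq t with h | h
  · conv_lhs => rw [h]
    rw [zpow_natCast, Units.val_pow_eq_pow_val]
  · conv_lhs => rw [h]
    rw [zpow_neg, zpow_natCast, norm_inv_sub_one, Units.val_pow_eq_pow_val]


lemma mem_ZpInQp_iff {z : ℚ_[p]} : z ∈ ZpInQp p ↔ ‖z‖ ≤ 1 := by
  constructor
  · rintro ⟨w, rfl⟩
    exact w.norm_le_one
  · intro h
    exact ⟨⟨z, h⟩, rfl⟩

lemma mk_eq_mk_iff {y z : ℚ_[p]} :
    (QuotientAddGroup.mk y : QpModZp p) = QuotientAddGroup.mk z ↔ ‖z - y‖ ≤ 1 := by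
  rw [QuotientAddGroup.eq, neg_add_eq_sub, mem_ZpInQp_iff]

lemma mk_eq_zero_iff {y : ℚ_[p]} :
    (QuotientAddGroup.mk y : QpModZp p) = 0 ↔ ‖y‖ ≤ 1 := by
  rw [QuotientAddGroup.eq_zero_iff, mem_ZpInQp_iff]

lemma coe_coe_zpow (a : ℤ_[p]ˣ) (t : ℤ) :
    (((a ^ t : ℤ_[p]ˣ) : ℤ_[p]) : ℚ_[p]) = ((a : ℤ_[p]) : ℚ_[p]) ^ t := by
  calc (((a ^ t : ℤ_[p]ˣ) : ℤ_[p]) : ℚ_[p])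
      = ((Units.map ((PadicInt.Coe.ringHom (p := p)).toMonoidHom) (a ^ t) : ℚ_[p]ˣ)
          : ℚ_[p]) := rfl
    _ = (((Units.map ((PadicInt.Coe.ringHom (p := p)).toMonoidHom) a) ^ t : ℚ_[p]ˣ)
          : ℚ_[p]) := by rw [map_zpow]
    _ = ((a : ℤ_[p]) : ℚ_[p]) ^ t := by rw [Units.val_zpow_eq_zpow_val]; rfl

lemma norm_unit_zpow (a : ℤ_[p]ˣ) (t : ℤ) : ‖((a : ℤ_[p]) : ℚ_[p]) ^ t‖ = 1 := by
  rw [norm_zpow, PadicInt.padic_norm_e_of_padicInt, PadicInt.norm_units, one_zpow]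

lemma twistedInvariant_iff {t : ℤ} {y : ℚ_[p]} :
    TwistedInvariant p t (QuotientAddGroup.mk y) ↔
      ∀ a : ℤ_[p]ˣ, ‖(((a : ℤ_[p]) : ℚ_[p]) ^ t - 1) * y‖ ≤ 1 := by
  constructor
  · intro h a
    have h1 := h a y rfl
    rw [mk_eq_mk_iff] at h1
    calc ‖(((a : ℤ_[p]) : ℚ_[p]) ^ t - 1) * y‖
        = ‖y - ((a : ℤ_[p]) : ℚ_[p]) ^ t * y‖ := by rw [← norm_neg]; congr 1; ring
      _ ≤ 1 := h1
  · intro h a y' hy'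
    rw [mk_eq_mk_iff] at hy' ⊢
    have hsum : y - ((a : ℤ_[p]) : ℚ_[p]) ^ t * y'
        = -((((a : ℤ_[p]) : ℚ_[p]) ^ t - 1) * y
            + ((a : ℤ_[p]) : ℚ_[p]) ^ t * (y' - y)) := by ring
    rw [hsum, norm_neg]
    refine (Padic.nonarchimedean _ _).trans (max_le (h a) ?_)
    rw [norm_mul, norm_unit_zpow, one_mul]
    exact hy'

lemma coe_sub_one (a : ℤ_[p]ˣ) (t : ℤ) :
    ((a : ℤ_[p]) : ℚ_[p]) ^ t - 1 = ((((a ^ t : ℤ_[p]ˣ) : ℤ_[p]) - 1 : ℤ_[p]) : ℚ_[p]) := by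
  rw [← coe_coe_zpow]; push_cast; ring

lemma mk_intSmul (m : ℤ) (y : ℚ_[p]) :
    m • (QuotientAddGroup.mk y : QpModZp p) = QuotientAddGroup.mk ((m : ℚ_[p]) * y) := by
  rw [← QuotientAddGroup.mk_zsmul]
  congr 1

lemma mk_natSmul (n : ℕ) (y : ℚ_[p]) :
    n • (QuotientAddGroup.mk y : QpModZp p) = QuotientAddGroup.mk ((n : ℚ_[p]) * y) := by
  rw [← QuotientAddGroup.mk_nsmul]
  congr 1

end Statement14Aux

open Statement14Aux in
/-- Let `p` be an odd prime and `t` a nonzero integer, and let `ℤ_p^×` act on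
`A = ℚ_p/ℤ_p` by `a·x = a^t·x`.  If `(p−1) ∤ t` then the invariants vanish; if
`t = k(p−1)` with `k = p^r·k₀` and `p ∤ k₀`, the invariants form a cyclic group of
order `p^{r+1}`. -/
theorem statement14 (p : ℕ) [Fact p.Prime] (hodd : Odd p) (t : ℤ) (ht : t ≠ 0) :
    (¬ ((p : ℤ) - 1) ∣ t → ∀ x : QpModZp p, TwistedInvariant p t x → x = 0) ∧
    (∀ (k k₀ : ℤ) (r : ℕ), t = k * ((p : ℤ) - 1) → k = (p : ℤ) ^ r * k₀ → ¬ (p : ℤ) ∣ k₀ →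
      ∃ x₀ : QpModZp p, TwistedInvariant p t x₀ ∧ addOrderOf x₀ = p ^ (r + 1) ∧
        ∀ x : QpModZp p, TwistedInvariant p t x ↔ ∃ m : ℤ, x = m • x₀) := by
  have hp : p.Prime := Fact.out
  have hp2 : 2 ≤ p := hp.two_le
  have hp3 : 3 ≤ p := by
    have := Nat.odd_iff.mp hodd
    omega
  have hp1R : (1 : ℝ) < p := by exact_mod_cast by omega
  haveI : NeZero p := ⟨hp.ne_zero⟩
  constructor
  · -- (p-1) ∤ t : invariants vanish
    intro hndvd x hx
    obtain ⟨y, rfl⟩ := QuotientAddGroup.mk_surjective x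
    obtain ⟨g, hg⟩ := IsCyclic.exists_generator (α := (ZMod p)ˣ)
    have horder : orderOf g = p - 1 := by
      rw [orderOf_eq_card_of_forall_mem_zpowers hg, Nat.card_eq_fintype_card,
        ZMod.card_units_eq_totient,
        Nat.totient_prime hp]
    have hgt : g ^ t ≠ 1 := by
      intro h
      apply hndvd
      have hdvd := orderOf_dvd_iff_zpow_eq_one.mpr h
      rw [horder] at hdvd
      have hcast : ((p - 1 : ℕ) : ℤ) = (p : ℤ) - 1 := by omega
      rwa [hcast] at hdvd
    set z : ℤ_[p] := ((g : ZMod p).val : ℤ_[p]) with hz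
    have htoZ : PadicInt.toZMod z = (g : ZMod p) := by
      rw [hz, map_natCast]
      exact ZMod.natCast_rightInverse _
    have hzu : IsUnit z := by
      refine PadicInt.isUnit_iff.mpr (norm_eq_one_of_not_dvd ?_)
      rw [dvd_iff_toZMod_eq_zero, htoZ]
      exact g.ne_zero
    set a := hzu.unit with hadef
    have ha : (a : ℤ_[p]) = z := hzu.unit_spec
    have hmapa : Units.map ((PadicInt.toZMod (p := p)).toMonoidHom) a = g := by
      ext
      rw [Units.coe_map]
      exact ha ▸ htoZ
    have hmap : PadicInt.toZMod ((a ^ t : ℤ_[p]ˣ) : ℤ_[p])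
        = ((g ^ t : (ZMod p)ˣ) : ZMod p) := by
      calc PadicInt.toZMod ((a ^ t : ℤ_[p]ˣ) : ℤ_[p])
          = ((Units.map ((PadicInt.toZMod (p := p)).toMonoidHom) (a ^ t)
              : (ZMod p)ˣ) : ZMod p) := rfl
        _ = _ := by rw [map_zpow, hmapa]
    have hnorm1 : ‖((a ^ t : ℤ_[p]ˣ) : ℤ_[p]) - 1‖ = 1 := by
      refine norm_eq_one_of_not_dvd ?_
      rw [dvd_iff_toZMod_eq_zero, map_sub, map_one, hmap, sub_eq_zero]
      intro h
      exact hgt (Units.ext h)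
    have hb := twistedInvariant_iff.mp hx a
    rw [coe_sub_one, norm_mul, PadicInt.padic_norm_e_of_padicInt, hnorm1,
      one_mul] at hb
    exact mk_eq_zero_iff.mpr hb
  · -- (p-1) ∣ t : invariants cyclic of order p^(r+1)
    intro k k₀ r hteq hkk hk₀
    have hk₀0 : k₀ ≠ 0 := fun h => hk₀ (h ▸ dvd_zero _)
    have hk₀abs : ¬ p ∣ k₀.natAbs := by
      intro h
      apply hk₀
      have h2 : (p : ℤ) ∣ (k₀.natAbs : ℤ) := Int.natCast_dvd_natCast.mpr h
      rwa [Int.dvd_natAbs] at h2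
    have hnat : t.natAbs = (p - 1) * (p ^ r * k₀.natAbs) := by
      rw [hteq, hkk, Int.natAbs_mul, Int.natAbs_mul, Int.natAbs_pow]
      have h1 : ((p : ℤ)).natAbs = p := Int.natAbs_natCast p
      have h2 : ((p : ℤ) - 1).natAbs = p - 1 := by omega
      rw [h1, h2]
      ring
    have hm0 : p ^ r * k₀.natAbs ≠ 0 :=
      Nat.mul_ne_zero (pow_ne_zero _ hp.ne_zero) (Int.natAbs_ne_zero.mpr hk₀0)
    have hnormm : ‖((p ^ r * k₀.natAbs : ℕ) : ℤ_[p])‖ = (p : ℝ)⁻¹ ^ r := by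
      have hcast : ((p ^ r * k₀.natAbs : ℕ) : ℤ_[p])
          = (p : ℤ_[p]) ^ r * (k₀.natAbs : ℤ_[p]) := by push_cast; ring
      rw [hcast, norm_mul, norm_pow, PadicInt.norm_p,
        norm_natCast_eq_one hk₀abs, mul_one]
    -- upper bound for all units
    have hub : ∀ a : ℤ_[p]ˣ,
        ‖((a ^ t : ℤ_[p]ˣ) : ℤ_[p]) - 1‖ ≤ (p : ℝ)⁻¹ ^ (r + 1) := by
      intro a
      rw [norm_zpow_sub_one, hnat, pow_mul]
      rw [norm_pow_sub_one hp3 _ hm0 _ (fermat a)]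
      have h1 : ‖(a : ℤ_[p]) ^ (p - 1) - 1‖ ≤ (p : ℝ)⁻¹ := by
        have hd := (PadicInt.norm_lt_one_iff_dvd _).mp (fermat a)
        have h2 := norm_le_of_dvd hd
        rwa [PadicInt.norm_p] at h2
      rw [hnormm]
      calc ‖(a : ℤ_[p]) ^ (p - 1) - 1‖ * (p : ℝ)⁻¹ ^ r
          ≤ (p : ℝ)⁻¹ * (p : ℝ)⁻¹ ^ r := by
            refine mul_le_mul_of_nonneg_right h1 (by positivity)
        _ = (p : ℝ)⁻¹ ^ (r + 1) := (pow_succ' _ _).symm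
    -- exact value for 1 + p
    have hu0 : IsUnit (1 + (p : ℤ_[p])) := by
      refine PadicInt.isUnit_iff.mpr ?_
      have h1 : ‖(p : ℤ_[p])‖ < ‖(1 : ℤ_[p])‖ := by
        rw [PadicInt.norm_p, norm_one]
        exact inv_lt_one_of_one_lt₀ hp1R
      rw [norm_add_eq_left h1, norm_one]
    set u₀ := hu0.unit with hu₀def
    have hu₀coe : (u₀ : ℤ_[p]) = 1 + (p : ℤ_[p]) := hu0.unit_spec
    have hu₀sub : (u₀ : ℤ_[p]) - 1 = (p : ℤ_[p]) := by rw [hu₀coe]; ring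
    have heq : ‖((u₀ ^ t : ℤ_[p]ˣ) : ℤ_[p]) - 1‖ = (p : ℝ)⁻¹ ^ (r + 1) := by
      rw [norm_zpow_sub_one,
        norm_pow_sub_one hp3 _ (by rw [hnat]; exact Nat.mul_ne_zero (by omega) hm0) _
          (by rw [hu₀sub, PadicInt.norm_p]; exact inv_lt_one_of_one_lt₀ hp1R),
        hu₀sub, PadicInt.norm_p, hnat]
      have hcast : (((p - 1) * (p ^ r * k₀.natAbs) : ℕ) : ℤ_[p])
          = ((p - 1 : ℕ) : ℤ_[p]) * ((p ^ r * k₀.natAbs : ℕ) : ℤ_[p]) := by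
        push_cast; ring
      have hpm1 : ¬ p ∣ (p - 1) := by
        intro h
        have := Nat.le_of_dvd (by omega) h
        omega
      rw [hcast, norm_mul, norm_natCast_eq_one hpm1, one_mul, hnormm]
      exact (pow_succ' _ _).symm
    -- the generator
    have hpQ : (p : ℚ_[p]) ≠ 0 := Nat.cast_ne_zero.mpr hp.ne_zero
    set y₀ : ℚ_[p] := ((p : ℚ_[p]) ^ (r + 1))⁻¹ with hy₀
    have hy₀norm : ‖y₀‖ = (p : ℝ) ^ (r + 1) := by
      rw [hy₀, norm_inv, norm_pow, Padic.norm_p, inv_pow, inv_inv]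
    have hy₀mul : (p : ℚ_[p]) ^ (r + 1) * y₀ = 1 :=
      mul_inv_cancel₀ (pow_ne_zero _ hpQ)
    have hprod : (p : ℝ)⁻¹ ^ (r + 1) * (p : ℝ) ^ (r + 1) = 1 := by
      rw [inv_pow]
      exact inv_mul_cancel₀ (by positivity)
    -- invariance of multiples of y₀
    have hinv : ∀ m : ℤ, TwistedInvariant p t
        (QuotientAddGroup.mk ((m : ℚ_[p]) * y₀)) := by
      intro m
      rw [twistedInvariant_iff]
      intro a
      rw [coe_sub_one, ← mul_assoc, norm_mul, norm_mul,
        PadicInt.padic_norm_e_of_padicInt, hy₀norm]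
      calc ‖((a ^ t : ℤ_[p]ˣ) : ℤ_[p]) - 1‖ * ‖(m : ℚ_[p])‖ * (p : ℝ) ^ (r + 1)
          ≤ (p : ℝ)⁻¹ ^ (r + 1) * 1 * (p : ℝ) ^ (r + 1) := by
            refine mul_le_mul_of_nonneg_right ?_ (by positivity)
            refine mul_le_mul (hub a) ?_ (norm_nonneg _) (by positivity)
            exact Padic.norm_int_le_one m
        _ = 1 := by rw [mul_one]; exact hprod
    refine ⟨QuotientAddGroup.mk y₀, ?_, ?_, ?_⟩
    · have h1 := hinv 1
      simpa using h1
    · -- addOrderOf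
      refine addOrderOf_eq_prime_pow ?_ ?_
      · rw [mk_natSmul, mk_eq_zero_iff]
        push_cast
        rw [norm_mul, norm_pow, Padic.norm_p, hy₀norm]
        rw [not_le]
        have hcalc : (p : ℝ)⁻¹ ^ r * (p : ℝ) ^ (r + 1) = p := by
          rw [inv_pow, pow_succ]
          field_simp
        rw [hcalc]
        exact hp1R
      · rw [mk_natSmul, mk_eq_zero_iff]
        push_cast
        rw [hy₀mul, norm_one]
    · intro x
      constructor
      · intro hx
        obtain ⟨y, rfl⟩ := QuotientAddGroup.mk_surjective x
        have hb := twistedInvariant_iff.mp hx u₀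
        rw [coe_sub_one, norm_mul, PadicInt.padic_norm_e_of_padicInt, heq] at hb
        have hy : ‖y * (p : ℚ_[p]) ^ (r + 1)‖ ≤ 1 := by
          rw [norm_mul, norm_pow, Padic.norm_p, mul_comm]
          exact hb
        set z' : ℤ_[p] := ⟨y * (p : ℚ_[p]) ^ (r + 1), hy⟩ with hz'
        set m : ℕ := z'.appr (r + 1) with hm
        refine ⟨(m : ℤ), ?_⟩
        rw [mk_intSmul, mk_eq_mk_iff (p := p)]
        have happr := z'.appr_spec (r + 1)
        rw [Ideal.mem_span_singleton] at happr
        have hnorm := norm_le_of_dvd happr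
        rw [norm_pow, PadicInt.norm_p] at hnorm
        have hcoez : ((z' : ℤ_[p]) : ℚ_[p]) = y * (p : ℚ_[p]) ^ (r + 1) := rfl
        have hsub : (m : ℚ_[p]) * y₀ - y
            = ((((m : ℤ_[p]) - z' : ℤ_[p])) : ℚ_[p]) * y₀ := by
          push_cast [hcoez]
          have hyy : y = y * (p : ℚ_[p]) ^ (r + 1) * y₀ := by
            rw [mul_assoc, hy₀mul, mul_one]
          rw [sub_mul]
          rw [← hyy]
        push_cast
        rw [hsub, norm_mul, PadicInt.padic_norm_e_of_padicInt, hy₀norm]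
        calc ‖(m : ℤ_[p]) - z'‖ * (p : ℝ) ^ (r + 1)
            ≤ (p : ℝ)⁻¹ ^ (r + 1) * (p : ℝ) ^ (r + 1) := by
              refine mul_le_mul_of_nonneg_right ?_ (by positivity)
              rw [norm_sub_rev]
              exact hnorm
          _ = 1 := hprod
      · rintro ⟨m, hmx⟩
        rw [hmx, mk_intSmul]
        exact hinv m
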